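/- Let M be a cancellative atomic monoid generated by its atoms. An element Δ ∈ M is a fundamental element if and only if Δ is a Garside element. -/

import Mathlib

/-- An atom of a monoid: a non-identity element that is indecomposable. -/
def IsMonAtom {M : Type*} [Monoid M] (a : M) : Prop :=
  a ≠ 1 ∧ ∀ b c : M, a = b * c → b = 1 ∨ c = 1

/-- A monoid is atomic if it carries a norm `ν` with `ν α = 0 ↔ α = 1` and
`ν (αβ) ≥ ν α + ν β`. -/
def IsAtomicMonoid (M : Type*) [Monoid M] : Prop :=
  ∃ ν : M → ℕ, (∀ a : M, ν a = 0 ↔ a = 1) ∧ ∀ a b : M, ν a + ν b ≤ ν (a * b)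

/-- Cancellation condition: `a * x * b = a * y * b` implies `x = y`. -/
def IsCancellative (M : Type*) [Monoid M] : Prop :=
  ∀ a b x y : M, a * x * b = a * y * b → x = y

/-- The monoid is generated by its atoms. -/
def GeneratedByAtoms (M : Type*) [Monoid M] : Prop :=
  Submonoid.closure {a : M | IsMonAtom a} = ⊤

/-- Quasi-central element: `s·Δ = Δ·σ(s)` for a permutation `σ` of the atoms. -/
def IsQuasiCentral {M : Type*} [Monoid M] (Δ : M) : Prop :=
  ∃ σ : {a : M // IsMonAtom a} ≃ {a : M // IsMonAtom a},
    ∀ s : {a : M // IsMonAtom a}, (s : M) * Δ = Δ * (σ s : M)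

/-- Fundamental element: there is a permutation `σ` of the atoms such that for every
atom `s` one has `Δ = s·Δ_s = Δ_s·σ(s)` for some `Δ_s`. -/
def IsFundamental {M : Type*} [Monoid M] (Δ : M) : Prop :=
  ∃ σ : {a : M // IsMonAtom a} ≃ {a : M // IsMonAtom a},
    ∀ s : {a : M // IsMonAtom a}, ∃ d : M, Δ = (s : M) * d ∧ Δ = d * (σ s : M)


/-- The set of left divisors of an element. -/
def leftDivisors {M : Type*} [Monoid M] (Δ : M) : Set M := {u : M | ∃ w, Δ = u * w}

/-- The set of right divisors of an element. -/
def rightDivisors {M : Type*} [Monoid M] (Δ : M) : Set M := {u : M | ∃ w, Δ = w * u}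

/-- Garside element: the sets of left and right divisors coincide, generate the monoid,
and are finite in number. -/
def IsGarsideElement {M : Type*} [Monoid M] (Δ : M) : Prop :=
  leftDivisors Δ = rightDivisors Δ ∧ Submonoid.closure (leftDivisors Δ) = ⊤ ∧
    (leftDivisors Δ).Finite

/-- An element of a cancellative atomic monoid generated by its (finitely many) atoms is
fundamental if and only if it is a Garside element. -/
theorem stmt_4 {M : Type*} [Monoid M] (hcan : IsCancellative M) (hat : IsAtomicMonoid M)
    (hgen : GeneratedByAtoms M) (hfin : {a : M | IsMonAtom a}.Finite) (Δ : M) :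
    IsFundamental Δ ↔ IsGarsideElement Δ := by
  -- cancellation helpers
  have lcan : ∀ a x y : M, a * x = a * y → x = y := by
    intro a x y h
    exact hcan a 1 x y (by simpa using h)
  have rcan : ∀ b x y : M, x * b = y * b → x = y := by
    intro b x y h
    exact hcan 1 b x y (by simpa using h)
  constructor
  · -- Fundamental → Garside
    rintro ⟨σ, hσ⟩
    -- atoms are left divisors
    have hatomL : ∀ s : M, IsMonAtom s → s ∈ leftDivisors Δ := by
      intro s hs
      obtain ⟨d, hd1, _⟩ := hσ ⟨s, hs⟩
      exact ⟨d, hd1⟩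
    -- quasi-central property on atoms
    have hqc : ∀ s : {a : M // IsMonAtom a}, (s : M) * Δ = Δ * (σ s : M) := by
      intro s
      obtain ⟨d, hd1, hd2⟩ := hσ s
      calc (s : M) * Δ = (s : M) * (d * (σ s : M)) := by rw [← hd2]
        _ = (s : M) * d * (σ s : M) := (mul_assoc _ _ _).symm
        _ = Δ * (σ s : M) := by rw [← hd1]
    -- every x satisfies x Δ = Δ y for some y
    have h1 : ∀ x : M, ∃ y : M, x * Δ = Δ * y := by
      intro x
      have hx : x ∈ Submonoid.closure {a : M | IsMonAtom a} := by
        rw [hgen]; exact Submonoid.mem_top x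
      induction hx using Submonoid.closure_induction with
      | mem a ha => exact ⟨(σ ⟨a, ha⟩ : M), hqc ⟨a, ha⟩⟩
      | one => exact ⟨1, by simp⟩
      | mul a b _ _ iha ihb =>
        obtain ⟨ya, hya⟩ := iha
        obtain ⟨yb, hyb⟩ := ihb
        exact ⟨ya * yb, by rw [mul_assoc, hyb, ← mul_assoc, hya, mul_assoc]⟩
    -- every x satisfies Δ x = z Δ for some z
    have h2 : ∀ x : M, ∃ z : M, Δ * x = z * Δ := by
      intro x
      have hx : x ∈ Submonoid.closure {a : M | IsMonAtom a} := by
        rw [hgen]; exact Submonoid.mem_top x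
      induction hx using Submonoid.closure_induction with
      | mem a ha =>
        refine ⟨(σ.symm ⟨a, ha⟩ : M), ?_⟩
        have h := hqc (σ.symm ⟨a, ha⟩)
        rw [Equiv.apply_symm_apply] at h
        exact h.symm
      | one => exact ⟨1, by simp⟩
      | mul a b _ _ iha ihb =>
        obtain ⟨za, hza⟩ := iha
        obtain ⟨zb, hzb⟩ := ihb
        exact ⟨za * zb, by rw [← mul_assoc, hza, mul_assoc, hzb, ← mul_assoc]⟩
    choose φ hφ using h1
    choose ψ hψ using h2
    -- φ is surjective
    have hsurj : ∀ u : M, ∃ v : M, φ v = u := by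
      intro u
      refine ⟨ψ u, ?_⟩
      exact (lcan Δ _ _ (by rw [← hφ (ψ u), ← hψ u])).symm
    -- φ is injective
    have hinj : ∀ x y : M, φ x = φ y → x = y := by
      intro x y h
      exact rcan Δ x y (by rw [hφ, hφ, h])
    -- φ is multiplicative
    have hmul : ∀ x y : M, φ (x * y) = φ x * φ y := by
      intro x y
      apply lcan Δ
      rw [← hφ (x * y), mul_assoc, hφ y, ← mul_assoc, hφ x, mul_assoc]
    -- φ fixes Δ
    have hΔ : φ Δ = Δ := lcan Δ _ _ (hφ Δ).symm
    constructor
    · -- left divisors = right divisors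
      ext u
      constructor
      · rintro ⟨w, hw⟩
        obtain ⟨u₀, hu₀⟩ := hsurj u
        obtain ⟨w₀, hw₀⟩ := hsurj w
        have hΔ0 : Δ = u₀ * w₀ := by
          apply hinj
          rw [hΔ, hmul, hu₀, hw₀, ← hw]
        refine ⟨w₀, ?_⟩
        apply lcan u₀
        calc u₀ * Δ = Δ * φ u₀ := hφ u₀
          _ = (u₀ * w₀) * u := by rw [← hΔ0, hu₀]
          _ = u₀ * (w₀ * u) := mul_assoc _ _ _
      · rintro ⟨w, hw⟩
        obtain ⟨u₀, hu₀⟩ := hsurj u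
        have h0 : Δ = u₀ * w := by
          apply rcan u
          calc Δ * u = Δ * φ u₀ := by rw [hu₀]
            _ = u₀ * Δ := (hφ u₀).symm
            _ = u₀ * (w * u) := by rw [← hw]
            _ = u₀ * w * u := (mul_assoc _ _ _).symm
        refine ⟨φ w, ?_⟩
        calc Δ = φ Δ := hΔ.symm
          _ = φ u₀ * φ w := by rw [h0, hmul]
          _ = u * φ w := by rw [hu₀]
    constructor
    · -- generation
      rw [eq_top_iff, ← hgen]
      apply Submonoid.closure_mono
      intro a ha
      exact hatomL a ha
    · -- finiteness of left divisors
      obtain ⟨ν, hν1, hν2⟩ := hat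
      haveI : Finite {a : M // IsMonAtom a} := hfin.to_subtype
      -- length of an atom word is at most the norm of its product
      have hlen : ∀ l : List M, (∀ a ∈ l, IsMonAtom a) → l.length ≤ ν l.prod := by
        intro l
        induction l with
        | nil => intro _; simp
        | cons a t ih =>
          intro h
          have ha : IsMonAtom a := h a (List.mem_cons_self (a := a) (l := t))
          have h1' : 1 ≤ ν a := by
            rcases Nat.eq_zero_or_pos (ν a) with h0 | h0
            · exact absurd ((hν1 a).mp h0) ha.1
            · exact h0
          have ht : t.length ≤ ν t.prod := ih (fun x hx => h x (List.mem_cons_of_mem a hx))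
          calc (a :: t).length = 1 + t.length := by simp [List.length_cons, Nat.add_comm]
            _ ≤ ν a + ν t.prod := Nat.add_le_add h1' ht
            _ ≤ ν (a * t.prod) := hν2 a t.prod
            _ = ν (a :: t).prod := by rw [List.prod_cons]
      have key : leftDivisors Δ ⊆
          (fun l : List {a : M // IsMonAtom a} => (l.map Subtype.val).prod) ''
            {l : List {a : M // IsMonAtom a} | l.length ≤ ν Δ} := by
        rintro u ⟨w, hw⟩
        have hu : u ∈ Submonoid.closure {a : M | IsMonAtom a} := by
          rw [hgen]; exact Submonoid.mem_top u
        obtain ⟨l, hl, hlp⟩ := Submonoid.exists_list_of_mem_closure hu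
        refine ⟨l.attach.map (fun x => (⟨x.1, hl x.1 x.2⟩ : {a : M // IsMonAtom a})), ?_, ?_⟩
        · have hlen1 :
              (l.attach.map (fun x => (⟨x.1, hl x.1 x.2⟩ : {a : M // IsMonAtom a}))).length
                = l.length := by simp
          have h2' : ν u ≤ ν Δ := by
            rw [hw]
            exact le_trans (Nat.le_add_right _ _) (hν2 u w)
          simp only [Set.mem_setOf_eq, hlen1]
          calc l.length ≤ ν l.prod := hlen l hl
            _ = ν u := by rw [hlp]
            _ ≤ ν Δ := h2'
        · have hml :
              ((l.attach.map
                (fun x => (⟨x.1, hl x.1 x.2⟩ : {a : M // IsMonAtom a}))).map Subtype.val) = l := by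
            rw [List.map_map]
            simp
          simp only [hml, hlp]
      exact Set.Finite.subset
        (Set.Finite.image _ (List.finite_length_le {a : M // IsMonAtom a} (ν Δ))) key
  · -- Garside → Fundamental
    rintro ⟨hLR, hclosure, hfinD⟩
    -- atoms are left divisors
    have hatomD : ∀ s : M, IsMonAtom s → s ∈ leftDivisors Δ := by
      intro s hs
      have hsD : s ∈ Submonoid.closure (leftDivisors Δ) := by
        rw [hclosure]; exact Submonoid.mem_top s
      obtain ⟨l, hl, hlp⟩ := Submonoid.exists_list_of_mem_closure hsD
      clear hsD
      induction l generalizing s with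
      | nil => exact absurd hlp.symm hs.1
      | cons a t ih =>
        rw [List.prod_cons] at hlp
        rcases hs.2 a t.prod hlp.symm with h | h
        · rw [h, one_mul] at hlp
          exact ih s hs (fun x hx => hl x (List.mem_cons_of_mem a hx)) hlp
        · rw [h, mul_one] at hlp
          rw [← hlp]
          exact hl a (List.mem_cons_self (a := a) (l := t))
    haveI : Finite ↥(leftDivisors Δ) := hfinD.to_subtype
    -- the right complement, staying inside the divisors
    have key : ∀ x : ↥(leftDivisors Δ), ∃ y : ↥(leftDivisors Δ), Δ = (x : M) * (y : M) := by
      rintro ⟨x, w, hw⟩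
      have hwS : w ∈ leftDivisors Δ := by
        rw [hLR]
        exact ⟨x, hw⟩
      exact ⟨⟨w, hwS⟩, hw⟩
    choose pd hpd using key
    have hconj : ∀ x : ↥(leftDivisors Δ), (x : M) * Δ = Δ * (pd (pd x) : M) := by
      intro x
      calc (x : M) * Δ = (x : M) * ((pd x : M) * (pd (pd x) : M)) := by rw [← hpd (pd x)]
        _ = ((x : M) * (pd x : M)) * (pd (pd x) : M) := (mul_assoc _ _ _).symm
        _ = Δ * (pd (pd x) : M) := by rw [← hpd x]
    have hfinj : Function.Injective (fun x => pd (pd x) : ↥(leftDivisors Δ) → ↥(leftDivisors Δ)) := by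
      intro x y h
      have h' : (pd (pd x) : M) = (pd (pd y) : M) := congrArg Subtype.val h
      have h2 : (x : M) * Δ = (y : M) * Δ := by
        rw [hconj x, hconj y, h']
      exact Subtype.ext (rcan Δ _ _ h2)
    have hfsurj : Function.Surjective (fun x => pd (pd x) : ↥(leftDivisors Δ) → ↥(leftDivisors Δ)) :=
      Finite.surjective_of_injective hfinj
    have hsur : ∀ y : ↥(leftDivisors Δ), ∃ x : ↥(leftDivisors Δ), (x : M) * Δ = Δ * (y : M) := by
      intro y
      obtain ⟨x, hx⟩ := hfsurj y
      refine ⟨x, ?_⟩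
      have hx' : (pd (pd x) : M) = (y : M) := congrArg Subtype.val hx
      rw [hconj x, hx']
    -- the double complement maps atoms to atoms
    have hfa : ∀ (s : M) (hs : IsMonAtom s), IsMonAtom (pd (pd ⟨s, hatomD s hs⟩) : M) := by
      intro s hs
      constructor
      · intro h1
        apply hs.1
        apply rcan Δ
        rw [hconj ⟨s, hatomD s hs⟩, h1, mul_one, one_mul]
      · intro b c hbc
        obtain ⟨w, hw⟩ := (pd (pd (⟨s, hatomD s hs⟩ : ↥(leftDivisors Δ)))).2
        have hΔbcw : Δ = b * (c * w) := by
          rw [hw, hbc, mul_assoc]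
        have hbS : b ∈ leftDivisors Δ := ⟨c * w, hΔbcw⟩
        have hcwS : c * w ∈ leftDivisors Δ := by
          rw [hLR]
          exact ⟨b, hΔbcw⟩
        obtain ⟨z, hz⟩ := hcwS
        have hcS : c ∈ leftDivisors Δ := ⟨w * z, by rw [hz, mul_assoc]⟩
        obtain ⟨b₀, hb₀⟩ := hsur ⟨b, hbS⟩
        obtain ⟨c₀, hc₀⟩ := hsur ⟨c, hcS⟩
        have hprod : (b₀ : M) * (c₀ : M) = s := by
          apply rcan Δ
          calc (b₀ : M) * (c₀ : M) * Δ = (b₀ : M) * ((c₀ : M) * Δ) := mul_assoc _ _ _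
            _ = (b₀ : M) * (Δ * c) := by rw [hc₀]
            _ = ((b₀ : M) * Δ) * c := (mul_assoc _ _ _).symm
            _ = Δ * b * c := by rw [hb₀]
            _ = Δ * (b * c) := mul_assoc _ _ _
            _ = Δ * (pd (pd ⟨s, hatomD s hs⟩) : M) := by rw [← hbc]
            _ = s * Δ := (hconj ⟨s, hatomD s hs⟩).symm
        rcases hs.2 (b₀ : M) (c₀ : M) hprod.symm with h | h
        · left
          apply lcan Δ
          rw [mul_one, ← hb₀, h, one_mul]
        · right
          apply lcan Δ
          rw [mul_one, ← hc₀, h, one_mul]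
    -- build the permutation of atoms
    haveI : Finite {a : M // IsMonAtom a} := hfin.to_subtype
    have hginj : Function.Injective
        (fun s : {a : M // IsMonAtom a} =>
          (⟨(pd (pd ⟨(s : M), hatomD s s.2⟩) : M), hfa s s.2⟩ : {a : M // IsMonAtom a})) := by
      intro s s' h
      have hv0 := congrArg (Subtype.val : {a : M // IsMonAtom a} → M) h
      have hv : (pd (pd ⟨(s : M), hatomD s s.2⟩) : M)
          = (pd (pd ⟨(s' : M), hatomD s' s'.2⟩) : M) := hv0
      have h2 := hfinj (Subtype.ext hv)
      have h3 := congrArg (Subtype.val : ↥(leftDivisors Δ) → M) h2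
      have hv2 : (s : M) = (s' : M) := h3
      exact Subtype.ext hv2
    have hgbij : Function.Bijective
        (fun s : {a : M // IsMonAtom a} =>
          (⟨(pd (pd ⟨(s : M), hatomD s s.2⟩) : M), hfa s s.2⟩ : {a : M // IsMonAtom a})) :=
      ⟨hginj, Finite.surjective_of_injective hginj⟩
    refine ⟨Equiv.ofBijective _ hgbij, ?_⟩
    intro s
    refine ⟨(pd ⟨(s : M), hatomD s s.2⟩ : M), ?_, ?_⟩
    · show Δ = (s : M) * (pd ⟨(s : M), hatomD s s.2⟩ : M)
      exact hpd ⟨(s : M), hatomD s s.2⟩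
    show Δ = (pd ⟨(s : M), hatomD s s.2⟩ : M) * (pd (pd ⟨(s : M), hatomD s s.2⟩) : M)
    exact hpd (pd ⟨(s : M), hatomD s s.2⟩)
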